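/- For an n×n real matrix X, define the generalized Toda vector field T^X on the space of n×n real matrices by T^X(g) = M(g·X·g⁻¹)·g, where g⁻¹ is Ring.inverse g and M is the projection onto skew-symmetric matrices along lower triangular matrices. Then for all n×n real matrices X, Y and every invertible g, the pointwise Lie bracket of vector fields satisfies (lieBracket T^X T^Y)(g) = T^{⁅X,Y⁆}(g), where ⁅X,Y⁆ = XY − YX. In other words, X ↦ T^X is a representation of gl_n(ℝ) by vector fields on the group of invertible matrices. -/

import Mathlib

open Matrix VectorField

attribute [local instance] Matrix.normedAddCommGroup Matrix.normedSpace

/-- The Toda projection: `M(A)_{ij} = A_{ij}` for `i < j`, `M(A)_{ij} = -A_{ji}` for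
`i > j`, and `M(A)_{ii} = 0`. -/
def todaProj {n : ℕ} (A : Matrix (Fin n) (Fin n) ℝ) : Matrix (Fin n) (Fin n) ℝ :=
  Matrix.of fun i j => if i < j then A i j else if j < i then -A j i else 0

/-- The generalized Toda vector field `𝒯^X(g) = M(g·X·g⁻¹)·g` on the space of `n×n`
real matrices. -/
noncomputable def todaField {n : ℕ} (X : Matrix (Fin n) (Fin n) ℝ) :
    Matrix (Fin n) (Fin n) ℝ → Matrix (Fin n) (Fin n) ℝ :=
  fun g => todaProj (g * X * Ring.inverse g) * g

variable {n : ℕ}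
abbrev Mx (n : ℕ) := Matrix (Fin n) (Fin n) ℝ

noncomputable def entryCLM (i j : Fin n) : Mx n →L[ℝ] ℝ :=
  LinearMap.toContinuousLinearMap
    { toFun := fun A => A i j
      map_add' := fun _ _ => rfl
      map_smul' := fun _ _ => rfl }

lemma diff_det : Differentiable ℝ (fun A : Mx n => A.det) := by
  simp only [Matrix.det_apply, Units.smul_def, zsmul_eq_mul]
  apply Differentiable.fun_sum
  intro σ _
  apply Differentiable.const_mul
  intro A
  exact (HasFDerivAt.finset_prod (fun i _ => (entryCLM (σ i) i).hasFDerivAt)).differentiableAt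

lemma diff_updateRow (j : Fin n) (c : Fin n → ℝ) :
    Differentiable ℝ (fun A : Mx n => A.updateRow j c) := by
  intro A
  refine differentiableAt_pi.mpr ?_
  intro p
  refine differentiableAt_pi.mpr ?_
  intro q
  by_cases h : p = j
  · subst h
    simp only [Matrix.updateRow_self]
    exact differentiableAt_const _
  · simp only [Matrix.updateRow_ne h]
    exact ((entryCLM p q).differentiable A)

lemma diff_adj : Differentiable ℝ (fun A : Mx n => A.adjugate) := by
  intro A
  refine differentiableAt_pi.mpr ?_
  intro i
  refine differentiableAt_pi.mpr ?_
  intro j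
  simp only [Matrix.adjugate_apply]
  exact (diff_det.comp (diff_updateRow j (Pi.single i 1))).differentiableAt

lemma ringInverse_eq : (Ring.inverse : Mx n → Mx n) =
    fun A => (Ring.inverse A.det) • A.adjugate := by
  funext A
  rw [← Matrix.nonsing_inv_eq_ringInverse, Matrix.inv_def]

lemma diff_inverse {g : Mx n} (hg : IsUnit g) :
    DifferentiableAt ℝ (Ring.inverse : Mx n → Mx n) g := by
  rw [ringInverse_eq]
  have hdet : g.det ≠ 0 := by
    simpa using (Matrix.isUnit_iff_isUnit_det g).mp hg |>.ne_zero
  have h1 : DifferentiableAt ℝ (fun A : Mx n => (A.det)⁻¹) g :=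
    (diff_det.differentiableAt).inv hdet
  have : DifferentiableAt ℝ (fun A : Mx n => (A.det)⁻¹ • A.adjugate) g :=
    h1.smul diff_adj.differentiableAt
  simpa [Ring.inverse_eq_inv'] using this

noncomputable def mulCLM : Mx n →L[ℝ] Mx n →L[ℝ] Mx n :=
  LinearMap.toContinuousLinearMap
    { toFun := fun A => LinearMap.toContinuousLinearMap
        { toFun := fun B => A * B
          map_add' := fun _ _ => by simp [mul_add]
          map_smul' := fun _ _ => by simp [Matrix.mul_smul] }
      map_add' := fun A B => by ext C; simp [add_mul]
      map_smul' := fun r A => by ext C; simp [Matrix.smul_mul] }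

@[simp] lemma mulCLM_apply (A B : Mx n) : mulCLM A B = A * B := rfl

noncomputable def mulCLM.flip (B : Mx n) : Mx n →L[ℝ] Mx n :=
  ContinuousLinearMap.flip mulCLM B

@[simp] lemma mulCLM.flip_apply (B A : Mx n) : mulCLM.flip B A = A * B := rfl

lemma HasFDerivAt.matmul {f g : Mx n → Mx n} {f' g' : Mx n →L[ℝ] Mx n} {x : Mx n}
    (hf : HasFDerivAt f f' x) (hg : HasFDerivAt g g' x) :
    HasFDerivAt (fun h => f h * g h)
      (((mulCLM.flip (g x)).comp f') + ((mulCLM (f x)).comp g')) x := by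
  have hb : IsBoundedBilinearMap ℝ (fun p : Mx n × Mx n => mulCLM p.1 p.2) :=
    mulCLM.isBoundedBilinearMap
  have := (hb.hasFDerivAt (f x, g x)).comp x (hf.prodMk hg)
  refine this.congr_fderiv ?_
  ext v : 1
  erw [ContinuousLinearMap.comp_apply, ContinuousLinearMap.prod_apply, hb.deriv_apply]
  exact add_comm _ _

noncomputable def invDeriv (g : Mx n) : Mx n →L[ℝ] Mx n :=
  -((mulCLM (Ring.inverse g)).comp (mulCLM.flip (Ring.inverse g)))

@[simp] lemma invDeriv_apply (g v : Mx n) :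
    invDeriv g v = -(Ring.inverse g * (v * Ring.inverse g)) := rfl

lemma isOpen_isUnit : IsOpen {h : Mx n | IsUnit h} := by
  have : {h : Mx n | IsUnit h} = (fun A : Mx n => A.det) ⁻¹' {x | x ≠ 0} := by
    ext h
    simp [Matrix.isUnit_iff_isUnit_det, isUnit_iff_ne_zero]
  rw [this]
  exact isOpen_ne.preimage diff_det.continuous

lemma hasFDerivAt_inverse {g : Mx n} (hg : IsUnit g) :
    HasFDerivAt (Ring.inverse : Mx n → Mx n) (invDeriv g) g := by
  have hf : DifferentiableAt ℝ (Ring.inverse : Mx n → Mx n) g := diff_inverse hg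
  have h1 : g * Ring.inverse g = 1 := Ring.mul_inverse_cancel _ hg
  have h2 : Ring.inverse g * g = 1 := Ring.inverse_mul_cancel _ hg
  set D := fderiv ℝ (Ring.inverse : Mx n → Mx n) g with hD
  have hφ : HasFDerivAt (fun h : Mx n => Ring.inverse h * h)
      (((mulCLM.flip g).comp D) + ((mulCLM (Ring.inverse g)).comp (ContinuousLinearMap.id ℝ (Mx n)))) g :=
    hf.hasFDerivAt.matmul (hasFDerivAt_id g)
  have heq : (fun h : Mx n => Ring.inverse h * h) =ᶠ[nhds g] (fun _ => 1) := by
    filter_upwards [isOpen_isUnit.mem_nhds hg] with h hh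
    exact Ring.inverse_mul_cancel _ hh
  have hzero : (((mulCLM.flip g).comp D) + ((mulCLM (Ring.inverse g)).comp (ContinuousLinearMap.id ℝ (Mx n)))) = 0 := by
    have := hφ.congr_of_eventuallyEq heq.symm
    have h0 : HasFDerivAt (fun _ : Mx n => (1 : Mx n)) (0 : Mx n →L[ℝ] Mx n) g :=
      hasFDerivAt_const _ _
    exact this.unique h0
  have key : ∀ v, D v * g + Ring.inverse g * v = 0 := by
    intro v
    have := congrArg (fun L : Mx n →L[ℝ] Mx n => L v) hzero
    simpa using this
  have : D = invDeriv g := by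
    ext v : 1
    have h3 : D v * g = -(Ring.inverse g * v) := by
      have := key v; linear_combination (norm := abel) this
    have : D v * g * Ring.inverse g = -(Ring.inverse g * v) * Ring.inverse g := by rw [h3]
    rw [mul_assoc, h1, mul_one] at this
    rw [this]
    simp [mul_assoc]
  rw [← this]
  exact hf.hasFDerivAt

lemma todaProj_add (A B : Mx n) : todaProj (A + B) = todaProj A + todaProj B := by
  ext i j
  simp only [todaProj, Matrix.of_apply, Matrix.add_apply]
  split_ifs <;> ring

lemma todaProj_smul (r : ℝ) (A : Mx n) : todaProj (r • A) = r • todaProj A := by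
  ext i j
  simp only [todaProj, Matrix.of_apply, Matrix.smul_apply, smul_eq_mul]
  split_ifs <;> ring

noncomputable def todaProjCLM : Mx n →L[ℝ] Mx n :=
  LinearMap.toContinuousLinearMap
    { toFun := todaProj
      map_add' := todaProj_add
      map_smul' := todaProj_smul }

@[simp] lemma todaProjCLM_apply (A : Mx n) : todaProjCLM A = todaProj A := rfl

lemma todaProj_sub (A B : Mx n) : todaProj (A - B) = todaProj A - todaProj B :=
  map_sub (todaProjCLM (n := n)) A B

lemma todaProj_skew {A : Mx n} (hA : Aᵀ = -A) : todaProj A = A := by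
  ext i j
  have hd : ∀ k, A k k = 0 := by
    intro k
    have := congrFun (congrFun hA k) k
    simp only [Matrix.transpose_apply, Matrix.neg_apply] at this
    linarith
  have hs : ∀ p q, A q p = -A p q := by
    intro p q
    have := congrFun (congrFun hA p) q
    simpa [Matrix.transpose_apply] using this
  simp only [todaProj, Matrix.of_apply]
  rcases lt_trichotomy i j with h | h | h
  · rw [if_pos h]
  · subst h
    rw [if_neg (lt_irrefl i), if_neg (lt_irrefl i)]
    exact (hd i).symm
  · rw [if_neg (not_lt.mpr h.le), if_pos h, hs i j, neg_neg]

/-- lower triangular: entries strictly above diagonal vanish implies todaProj = 0 -/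
lemma todaProj_lower {A : Mx n} (hA : ∀ i j : Fin n, i < j → A i j = 0) :
    todaProj A = 0 := by
  ext i j
  simp only [todaProj, Matrix.of_apply, Matrix.zero_apply]
  rcases lt_trichotomy i j with h | h | h
  · rw [if_pos h]; exact hA i j h
  · subst h; rw [if_neg (lt_irrefl i), if_neg (lt_irrefl i)]
  · rw [if_neg (not_lt.mpr h.le), if_pos h, hA j i h, neg_zero]

lemma skew_todaProj (A : Mx n) : (todaProj A)ᵀ = -(todaProj A) := by
  ext i j
  simp only [Matrix.transpose_apply, Matrix.neg_apply, todaProj, Matrix.of_apply]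
  rcases lt_trichotomy i j with h | h | h
  · rw [if_neg (not_lt.mpr h.le), if_pos h, if_pos h]
  · subst h; simp
  · rw [if_pos h, if_neg (not_lt.mpr h.le), if_pos h, neg_neg]

lemma lower_sub_todaProj (A : Mx n) (i j : Fin n) (h : i < j) : (A - todaProj A) i j = 0 := by
  simp only [Matrix.sub_apply, todaProj, Matrix.of_apply, if_pos h]
  ring

lemma lower_mul {A B : Mx n} (hA : ∀ i j : Fin n, i < j → A i j = 0)
    (hB : ∀ i j : Fin n, i < j → B i j = 0) (i j : Fin n) (h : i < j) :
    (A * B) i j = 0 := by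
  rw [Matrix.mul_apply]
  apply Finset.sum_eq_zero
  intro k _
  rcases lt_or_ge i k with hk | hk
  · rw [hA i k hk, zero_mul]
  · rw [hB k j (lt_of_le_of_lt hk h), mul_zero]

lemma todaProj_zero : todaProj (0 : Mx n) = 0 := map_zero (todaProjCLM (n := n))

lemma todaProj_neg (A : Mx n) : todaProj (-A) = -todaProj A := map_neg (todaProjCLM (n := n)) A

lemma toda_key' (u v w z : Mx n) (hu : todaProj u = u) (hz : todaProj z = 0) :
    todaProj (u + v) - todaProj (-u - w) + (-u) = todaProj (u + v + w + z) := by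
  simp only [todaProj_add, todaProj_sub, todaProj_neg, hu, hz]
  abel

/-- The key algebraic identity. -/
lemma toda_key (A B : Mx n) :
    todaProj (todaProj A * B - B * todaProj A)
      - todaProj (todaProj B * A - A * todaProj B)
      + (todaProj B * todaProj A - todaProj A * todaProj B)
      = todaProj (A * B - B * A) := by
  obtain ⟨a, ha⟩ : ∃ a, todaProj A = a := ⟨_, rfl⟩
  obtain ⟨b, hb⟩ : ∃ b, todaProj B = b := ⟨_, rfl⟩
  have hAa : A = a + (A - a) := by abel
  have hBb : B = b + (B - b) := by abel
  have hu' : todaProj (a * b - b * a) = a * b - b * a := by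
    apply todaProj_skew
    rw [Matrix.transpose_sub, Matrix.transpose_mul, Matrix.transpose_mul,
      ← ha, ← hb, skew_todaProj A, skew_todaProj B]
    simp only [Matrix.neg_mul, Matrix.mul_neg, neg_neg]
    abel
  have hz' : todaProj ((A - a) * (B - b) - (B - b) * (A - a)) = 0 := by
    apply todaProj_lower
    intro i j h
    have hlA : ∀ i j : Fin n, i < j → (A - a) i j = 0 := by
      intro i j h; rw [← ha]; exact lower_sub_todaProj A i j h
    have hlB : ∀ i j : Fin n, i < j → (B - b) i j = 0 := by
      intro i j h; rw [← hb]; exact lower_sub_todaProj B i j h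
    rw [Matrix.sub_apply, lower_mul hlA hlB i j h, lower_mul hlB hlA i j h, sub_zero]
  have e1 : a * B - B * a = (a * b - b * a) + (a * (B - b) - (B - b) * a) := by noncomm_ring
  have e2 : b * A - A * b = -(a * b - b * a) - ((A - a) * b - b * (A - a)) := by noncomm_ring
  have e3 : A * B - B * A = (a * b - b * a) + (a * (B - b) - (B - b) * a)
      + ((A - a) * b - b * (A - a)) + ((A - a) * (B - b) - (B - b) * (A - a)) := by noncomm_ring
  have e4 : b * a - a * b = -(a * b - b * a) := by noncomm_ring
  rw [ha, hb, e1, e2, e3, e4]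
  exact toda_key' _ _ _ _ hu' hz'

lemma hasFDerivAt_todaField (X : Mx n) {g : Mx n} (hg : IsUnit g) :
    HasFDerivAt (todaField X)
      (((mulCLM.flip g).comp (todaProjCLM.comp
          (((mulCLM.flip (Ring.inverse g)).comp (mulCLM.flip X))
            + ((mulCLM (g * X)).comp (invDeriv g)))))
        + ((mulCLM (todaProj (g * X * Ring.inverse g))).comp (ContinuousLinearMap.id ℝ (Mx n)))) g := by
  have h1 : HasFDerivAt (fun h : Mx n => h * X) (mulCLM.flip X) g := by
    exact (mulCLM.flip X).hasFDerivAt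
  have h3 : HasFDerivAt (fun h : Mx n => h * X * Ring.inverse h)
      (((mulCLM.flip (Ring.inverse g)).comp (mulCLM.flip X))
        + ((mulCLM (g * X)).comp (invDeriv g))) g :=
    h1.matmul (hasFDerivAt_inverse hg)
  have h4 : HasFDerivAt (fun h : Mx n => todaProj (h * X * Ring.inverse h))
      (todaProjCLM.comp (((mulCLM.flip (Ring.inverse g)).comp (mulCLM.flip X))
        + ((mulCLM (g * X)).comp (invDeriv g)))) g :=
    (todaProjCLM.hasFDerivAt).comp g h3
  exact h4.matmul (hasFDerivAt_id g)

lemma fderiv_todaField_apply (X : Mx n) {g : Mx n} (hg : IsUnit g) (v : Mx n) :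
    fderiv ℝ (todaField X) g v =
      todaProj (v * X * Ring.inverse g
          - g * X * Ring.inverse g * (v * Ring.inverse g)) * g
        + todaProj (g * X * Ring.inverse g) * v := by
  rw [(hasFDerivAt_todaField X hg).fderiv]
  simp only [ContinuousLinearMap.add_apply, ContinuousLinearMap.comp_apply,
    ContinuousLinearMap.flip_apply, mulCLM.flip_apply, ContinuousLinearMap.coe_id', id_eq,
    todaProjCLM_apply, mulCLM_apply, invDeriv_apply]
  rw [show v * X * Ring.inverse g + g * X * -(Ring.inverse g * (v * Ring.inverse g))
      = v * X * Ring.inverse g - g * X * Ring.inverse g * (v * Ring.inverse g) by noncomm_ring]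

/-- `X ↦ 𝒯^X` is a representation of `gl_n(ℝ)` by vector fields on the group of
invertible matrices: `[𝒯^X, 𝒯^Y](g) = 𝒯^{⁅X,Y⁆}(g)` at every invertible `g`. -/
theorem lieBracket_todaField {n : ℕ}
    (X Y : Matrix (Fin n) (Fin n) ℝ) (g : Matrix (Fin n) (Fin n) ℝ) (hg : IsUnit g) :
    lieBracket ℝ (todaField X) (todaField Y) g = todaField (X * Y - Y * X) g := by
  have hgJ : g * Ring.inverse g = 1 := Ring.mul_inverse_cancel _ hg
  have hJg : Ring.inverse g * g = 1 := Ring.inverse_mul_cancel _ hg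
  set J := Ring.inverse g with hJ
  set A := g * X * J with hA
  set B := g * Y * J with hB
  rw [VectorField.lieBracket]
  show fderiv ℝ (todaField Y) g (todaField X g) - fderiv ℝ (todaField X) g (todaField Y g)
    = todaField (X * Y - Y * X) g
  rw [show todaField X g = todaProj A * g from rfl, show todaField Y g = todaProj B * g from rfl]
  rw [fderiv_todaField_apply Y hg, fderiv_todaField_apply X hg]
  rw [← hJ, ← hA, ← hB]
  have key1 : todaProj A * g * Y * J = todaProj A * B := by
    rw [hB]; noncomm_ring
  have key2 : B * (todaProj A * g * J) = B * todaProj A := by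
    rw [mul_assoc (todaProj A) g J, hgJ, mul_one]
  have key3 : todaProj B * g * X * J = todaProj B * A := by
    rw [hA]; noncomm_ring
  have key4 : A * (todaProj B * g * J) = A * todaProj B := by
    rw [mul_assoc (todaProj B) g J, hgJ, mul_one]
  rw [key1, key2, key3, key4]
  have hRHS : todaField (X * Y - Y * X) g = todaProj (A * B - B * A) * g := by
    show todaProj (g * (X * Y - Y * X) * J) * g = _
    congr 2
    have h1 : g * (X * Y) * J = A * B := by
      rw [hA, hB, show g * X * J * (g * Y * J) = g * X * (J * g) * Y * J by noncomm_ring,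
        hJg, mul_one]
      noncomm_ring
    have h2 : g * (Y * X) * J = B * A := by
      rw [hA, hB, show g * Y * J * (g * X * J) = g * Y * (J * g) * X * J by noncomm_ring,
        hJg, mul_one]
      noncomm_ring
    rw [← h1, ← h2]
    noncomm_ring
  rw [hRHS, ← toda_key A B]
  noncomm_ring
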